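/- For every multi-index (k₁,…,k_m) ∈ ℕ^m and every z = (z₁,…,z_m) ∈ ℂ^m, the m-dimensional Segal–Bargmann transform sends the corresponding Hermite basis function to the monomial: (2π)^{-m/2} ∫_{ℝ^m} exp(−z·z/2 + x·z − x·x/4) · (∏_{j=1}^m H_{k_j}(x_j)) e^{−|x|²/4} dx = z₁^{k₁} ⋯ z_m^{k_m}. -/

import Mathlib

open MeasureTheory Polynomial Filter Set
open scoped Real


lemma sb_integrable_abs_pow_gauss (n : ℕ) :
    Integrable (fun x : ℝ => |x| ^ n * rexp (-(1/4) * x ^ 2)) := by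
  have h := integrable_rpow_mul_exp_neg_mul_sq (b := (1/4 : ℝ)) (by norm_num)
      (s := (n : ℝ)) (by exact_mod_cast neg_one_lt_zero.trans_le (Nat.cast_nonneg n))
  have h' : Integrable (fun x : ℝ => x ^ n * rexp (-(1/4) * x ^ 2)) := by
    simpa [Real.rpow_natCast] using h
  have := h'.abs
  refine this.congr ?_
  filter_upwards with x
  rw [abs_mul, abs_of_pos (Real.exp_pos _), abs_pow]

lemma sb_tendsto_abs_pow_gauss_top (n : ℕ) :
    Tendsto (fun x : ℝ => |x| ^ n * rexp (-(1/4) * x ^ 2)) atTop (nhds 0) := by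
  have ho := rpow_mul_exp_neg_mul_sq_isLittleO_exp_neg (b := (1/4 : ℝ)) (by norm_num) (n : ℝ)
  have hexp : Tendsto (fun x : ℝ => rexp (-(1/2) * x)) atTop (nhds 0) := by
    have h1 : Tendsto (fun x : ℝ => -(1/2) * x) atTop atBot := by
      have h0 := (tendsto_id (α := ℝ)).const_mul_atTop (show (0:ℝ) < 1/2 by norm_num)
      exact (tendsto_neg_atTop_atBot.comp h0).congr fun x => by
        simp only [Function.comp_apply, id]; ring
    exact Real.tendsto_exp_atBot.comp h1
  have := ho.isBigO.trans_tendsto hexp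
  refine this.congr' ?_
  filter_upwards [eventually_gt_atTop (0:ℝ)] with x hx
  rw [Real.rpow_natCast, abs_of_pos hx]

lemma sb_tendsto_abs_pow_gauss_bot (n : ℕ) :
    Tendsto (fun x : ℝ => |x| ^ n * rexp (-(1/4) * x ^ 2)) atBot (nhds 0) := by
  have := (sb_tendsto_abs_pow_gauss_top n).comp tendsto_neg_atBot_atTop
  refine this.congr ?_
  intro x; simp [Function.comp, abs_neg, neg_sq]

lemma sb_re_neg_sq (z : ℂ) (x : ℝ) :
    (-((x:ℂ) - z)^2/2).re = z.im^2/2 - (x - z.re)^2/2 := by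
  simp [Complex.div_re, Complex.normSq, pow_two, Complex.mul_re, Complex.mul_im,
    Complex.sub_re, Complex.sub_im, Complex.ofReal_re, Complex.ofReal_im]
  ring

lemma sb_norm_cexp (z : ℂ) (x : ℝ) :
    ‖Complex.exp (-((x:ℂ) - z)^2/2)‖ = rexp (z.im^2/2) * rexp (-((x - z.re)^2/2)) := by
  rw [Complex.norm_exp, ← Real.exp_add, sb_re_neg_sq]
  ring_nf

lemma sb_exp_shift_le (a x : ℝ) :
    rexp (-((x - a)^2/2)) ≤ rexp (a^2/2) * rexp (-(1/4) * x^2) := by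
  rw [← Real.exp_add]
  apply Real.exp_le_exp.2
  nlinarith [sq_nonneg (x/2 - a)]

lemma sb_poly_norm_le (Q : Polynomial ℂ) (x : ℝ) :
    ‖Q.eval (x:ℂ)‖ ≤ ∑ i ∈ Finset.range (Q.natDegree + 1), ‖Q.coeff i‖ * |x| ^ i := by
  conv_lhs => rw [Polynomial.eval_eq_sum_range]
  refine (norm_sum_le _ _).trans (Finset.sum_le_sum fun i _ => ?_)
  rw [norm_mul, norm_pow, Complex.norm_real, Real.norm_eq_abs]

noncomputable def sbD (Q : Polynomial ℂ) (z : ℂ) (x : ℝ) : ℝ :=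
  rexp (z.im^2/2) * rexp (z.re^2/2) *
    ∑ i ∈ Finset.range (Q.natDegree + 1), ‖Q.coeff i‖ * (|x| ^ i * rexp (-(1/4) * x^2))

lemma sb_norm_le (Q : Polynomial ℂ) (z : ℂ) (x : ℝ) :
    ‖Q.eval (x:ℂ) * Complex.exp (-((x:ℂ) - z)^2/2)‖ ≤ sbD Q z x := by
  rw [norm_mul, sb_norm_cexp]
  calc ‖Q.eval (x:ℂ)‖ * (rexp (z.im^2/2) * rexp (-((x - z.re)^2/2)))
      ≤ (∑ i ∈ Finset.range (Q.natDegree+1), ‖Q.coeff i‖ * |x|^i) *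
        (rexp (z.im^2/2) * (rexp (z.re^2/2) * rexp (-(1/4)*x^2))) := by
        refine mul_le_mul (sb_poly_norm_le Q x) ?_ (by positivity) ?_
        · exact mul_le_mul_of_nonneg_left (sb_exp_shift_le z.re x) (Real.exp_pos _).le
        · positivity
    _ = sbD Q z x := by
        rw [sbD, Finset.sum_mul, Finset.mul_sum]
        refine Finset.sum_congr rfl fun i _ => by ring

lemma sbD_integrable (Q : Polynomial ℂ) (z : ℂ) : Integrable (sbD Q z) := by
  unfold sbD
  refine (integrable_finset_sum _ fun i _ => ?_).const_mul _
  exact (sb_integrable_abs_pow_gauss i).const_mul _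

lemma sbD_tendsto_top (Q : Polynomial ℂ) (z : ℂ) : Tendsto (sbD Q z) atTop (nhds 0) := by
  unfold sbD
  have h : Tendsto (fun x : ℝ => ∑ i ∈ Finset.range (Q.natDegree + 1),
      ‖Q.coeff i‖ * (|x| ^ i * rexp (-(1/4) * x^2))) atTop (nhds 0) := by
    have := tendsto_finset_sum (Finset.range (Q.natDegree + 1))
      (fun i _ => (sb_tendsto_abs_pow_gauss_top i).const_mul ‖Q.coeff i‖)
    simpa using this
  simpa using h.const_mul (rexp (z.im^2/2) * rexp (z.re^2/2))

lemma sbD_tendsto_bot (Q : Polynomial ℂ) (z : ℂ) : Tendsto (sbD Q z) atBot (nhds 0) := by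
  unfold sbD
  have h : Tendsto (fun x : ℝ => ∑ i ∈ Finset.range (Q.natDegree + 1),
      ‖Q.coeff i‖ * (|x| ^ i * rexp (-(1/4) * x^2))) atBot (nhds 0) := by
    have := tendsto_finset_sum (Finset.range (Q.natDegree + 1))
      (fun i _ => (sb_tendsto_abs_pow_gauss_bot i).const_mul ‖Q.coeff i‖)
    simpa using this
  simpa using h.const_mul (rexp (z.im^2/2) * rexp (z.re^2/2))

lemma sb_cont_g (Q : Polynomial ℂ) (z : ℂ) :
    Continuous (fun x : ℝ => Q.eval (x:ℂ) * Complex.exp (-((x:ℂ) - z)^2/2)) := by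
  have c1 : Continuous fun x : ℝ => Q.eval (x:ℂ) :=
    Q.continuous.comp Complex.continuous_ofReal
  have c2 : Continuous fun x : ℝ => Complex.exp (-((x:ℂ) - z)^2/2) := by
    apply Complex.continuous_exp.comp
    fun_prop
  exact c1.mul c2

lemma sb_integrable_g (Q : Polynomial ℂ) (z : ℂ) :
    Integrable (fun x : ℝ => Q.eval (x:ℂ) * Complex.exp (-((x:ℂ) - z)^2/2)) := by
  refine Integrable.mono' (sbD_integrable Q z) ?_ (ae_of_all _ fun x => sb_norm_le Q z x)
  exact (sb_cont_g Q z).aestronglyMeasurable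

lemma sb_tendsto_g_top (Q : Polynomial ℂ) (z : ℂ) :
    Tendsto (fun x : ℝ => Q.eval (x:ℂ) * Complex.exp (-((x:ℂ) - z)^2/2)) atTop (nhds 0) :=
  squeeze_zero_norm (fun x => sb_norm_le Q z x) (sbD_tendsto_top Q z)

lemma sb_tendsto_g_bot (Q : Polynomial ℂ) (z : ℂ) :
    Tendsto (fun x : ℝ => Q.eval (x:ℂ) * Complex.exp (-((x:ℂ) - z)^2/2)) atBot (nhds 0) :=
  squeeze_zero_norm (fun x => sb_norm_le Q z x) (sbD_tendsto_bot Q z)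

lemma sb_hasDerivAt (Q : Polynomial ℂ) (z : ℂ) (x : ℝ) :
    HasDerivAt (fun t : ℝ => Q.eval (t:ℂ) * Complex.exp (-((t:ℂ) - z)^2/2))
      ((Q.derivative.eval (x:ℂ) - ((x:ℂ) - z) * Q.eval (x:ℂ)) *
        Complex.exp (-((x:ℂ) - z)^2/2)) x := by
  have h1 : HasDerivAt (fun y : ℂ => Q.eval y) (Q.derivative.eval (x:ℂ)) (x:ℂ) :=
    Q.hasDerivAt _
  have h2i : HasDerivAt (fun y : ℂ => -(y - z)^2/2) (-((x:ℂ) - z)) (x:ℂ) := by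
    have h := (((hasDerivAt_id (x:ℂ)).sub_const z).pow 2).neg.div_const 2
    refine h.congr_deriv ?_
    simp; ring
  have h2 : HasDerivAt (fun y : ℂ => Complex.exp (-(y - z)^2/2))
      (-((x:ℂ) - z) * Complex.exp (-((x:ℂ) - z)^2/2)) (x:ℂ) := by
    have h := h2i.cexp
    refine h.congr_deriv ?_
    ring
  have h3 := (h1.comp_ofReal).mul (h2.comp_ofReal)
  refine h3.congr_deriv ?_
  ring

lemma sb_integral_deriv_zero (Q : Polynomial ℂ) (z : ℂ) :
    ∫ x : ℝ, (Q.derivative.eval (x:ℂ) - ((x:ℂ) - z) * Q.eval (x:ℂ)) *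
      Complex.exp (-((x:ℂ) - z)^2/2) = 0 := by
  set R : Polynomial ℂ := Q.derivative - (Polynomial.X - Polynomial.C z) * Q with hR
  have hRe : ∀ x : ℝ, R.eval (x:ℂ) =
      Q.derivative.eval (x:ℂ) - ((x:ℂ) - z) * Q.eval (x:ℂ) := by
    intro x; simp [hR]
  have hint : Integrable (fun x : ℝ =>
      (Q.derivative.eval (x:ℂ) - ((x:ℂ) - z) * Q.eval (x:ℂ)) *
        Complex.exp (-((x:ℂ) - z)^2/2)) := by
    refine (sb_integrable_g R z).congr ?_
    filter_upwards with x
    rw [hRe]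
  have hIoi := integral_Ioi_of_hasDerivAt_of_tendsto' (a := 0)
    (fun x _ => sb_hasDerivAt Q z x) hint.integrableOn (sb_tendsto_g_top Q z)
  have hIic := integral_Iic_of_hasDerivAt_of_tendsto' (a := 0)
    (fun x _ => sb_hasDerivAt Q z x) hint.integrableOn (sb_tendsto_g_bot Q z)
  rw [← intervalIntegral.integral_Iic_add_Ioi (b := (0:ℝ)) hint.integrableOn hint.integrableOn,
    hIoi, hIic]
  ring

lemma sb_integrable_g' (Q : Polynomial ℂ) (z : ℂ) :
    Integrable (fun x : ℝ =>
      (Q.derivative.eval (x:ℂ) - ((x:ℂ) - z) * Q.eval (x:ℂ)) *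
        Complex.exp (-((x:ℂ) - z)^2/2)) := by
  refine (sb_integrable_g (Q.derivative - (Polynomial.X - Polynomial.C z) * Q) z).congr ?_
  filter_upwards with x
  simp

lemma sb_key (k : ℕ) (z : ℂ) :
    ∫ x : ℝ, ((hermite k).map (Int.castRingHom ℂ)).eval (x:ℂ) *
      Complex.exp (-((x:ℂ) - z)^2/2) = (Real.sqrt (2 * Real.pi) : ℂ) * z ^ k := by
  induction k with
  | zero =>
      simp only [hermite_zero, Polynomial.map_one, Polynomial.map_C, map_one, Polynomial.eval_C,
        Polynomial.eval_one, one_mul, pow_zero, mul_one]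
      have h : ∀ x : ℝ, -((x:ℂ) - z)^2/2 = (-(1/2):ℂ) * (x:ℂ)^2 + z * (x:ℂ) + (-z^2/2) := by
        intro x; ring
      simp_rw [h]
      rw [integral_cexp_quadratic (b := -(1/2)) (by norm_num) z (-z^2/2)]
      have h1 : -z^2/2 - z^2/(4 * (-(1/2):ℂ)) = 0 := by ring
      have h2 : ((Real.pi : ℂ) / -(-(1/2):ℂ)) = ((2 * Real.pi : ℝ) : ℂ) := by
        push_cast; ring
      rw [h1, Complex.exp_zero, mul_one, h2, Real.sqrt_eq_rpow,
        Complex.ofReal_cpow (by positivity)]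
      norm_num
  | succ k ih =>
      have hmap : (hermite (k+1)).map (Int.castRingHom ℂ) =
          Polynomial.X * (hermite k).map (Int.castRingHom ℂ) -
          ((hermite k).map (Int.castRingHom ℂ)).derivative := by
        rw [hermite_succ, Polynomial.map_sub, Polynomial.map_mul, Polynomial.map_X,
          Polynomial.derivative_map]
      set Q := (hermite k).map (Int.castRingHom ℂ) with hQ
      have hfun : ∀ x : ℝ,
          ((hermite (k+1)).map (Int.castRingHom ℂ)).eval (x:ℂ) *
            Complex.exp (-((x:ℂ) - z)^2/2)
          = z * (Q.eval (x:ℂ) * Complex.exp (-((x:ℂ) - z)^2/2))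
            - (Q.derivative.eval (x:ℂ) - ((x:ℂ) - z) * Q.eval (x:ℂ)) *
              Complex.exp (-((x:ℂ) - z)^2/2) := by
        intro x
        rw [hmap]
        simp only [Polynomial.eval_sub, Polynomial.eval_mul, Polynomial.eval_X]
        ring
      simp_rw [hfun]
      rw [integral_sub ((sb_integrable_g Q z).const_mul z) (sb_integrable_g' Q z),
        integral_const_mul, ih, sb_integral_deriv_zero Q z]
      ring

/-- The `m`-dimensional Segal–Bargmann transform sends the Hermite basis function
`(∏_j H_{k_j}(x_j)) e^{-|x|²/4}` to the monomial `z₁^{k₁} ⋯ z_m^{k_m}`. -/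
theorem segalBargmann_multiHermite (m : ℕ) (k : Fin m → ℕ) (z : Fin m → ℂ) :
    ((Real.sqrt (2 * Real.pi) ^ m : ℝ) : ℂ)⁻¹ *
      ∫ x : Fin m → ℝ,
        Complex.exp (-(∑ j, z j ^ 2) / 2 + (∑ j, (x j : ℂ) * z j) - (∑ j, (x j : ℂ) ^ 2) / 4)
          * (∏ j, aeval ((x j : ℂ)) (hermite (k j)))
          * (Real.exp (-(∑ j, x j ^ 2) / 4) : ℂ)
    = ∏ j, z j ^ k j := by
  have hint : ∀ (x : Fin m → ℝ),
      Complex.exp (-(∑ j, z j ^ 2) / 2 + (∑ j, (x j : ℂ) * z j) - (∑ j, (x j : ℂ) ^ 2) / 4)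
        * (∏ j, aeval ((x j : ℂ)) (hermite (k j)))
        * (Real.exp (-(∑ j, x j ^ 2) / 4) : ℂ)
      = ∏ j, ((hermite (k j)).map (Int.castRingHom ℂ)).eval ((x j : ℂ)) *
          Complex.exp (-((x j : ℂ) - z j)^2/2) := by
    intro x
    have h1 : (Real.exp (-(∑ j, x j ^ 2) / 4) : ℂ)
        = Complex.exp (-(∑ j, ((x j : ℝ) : ℂ) ^ 2) / 4) := by
      rw [Complex.ofReal_exp]
      congr 1
      push_cast
      ring
    have haev : ∀ j, (aeval ((x j : ℂ)) (hermite (k j)) : ℂ)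
        = ((hermite (k j)).map (Int.castRingHom ℂ)).eval ((x j : ℂ)) := by
      intro j
      rw [Polynomial.aeval_def, Polynomial.eval_map, algebraMap_int_eq]
    have hsum : (-(∑ j, ((x j : ℝ) : ℂ) ^ 2) / 4)
        + (-(∑ j, z j ^ 2) / 2 + (∑ j, (x j : ℂ) * z j) - (∑ j, (x j : ℂ) ^ 2) / 4)
        = ∑ j, (-(((x j : ℂ)) - z j)^2/2) := by
      have hterm : ∀ j : Fin m, -(((x j : ℂ)) - z j)^2/2
          = -(z j^2)/2 + ((x j : ℂ) * z j - (x j:ℂ)^2/4 - (x j:ℂ)^2/4) := fun j => by ring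
      rw [Finset.sum_congr rfl (fun j _ => hterm j)]
      simp only [Finset.sum_add_distrib, Finset.sum_sub_distrib, Finset.sum_neg_distrib,
        ← Finset.sum_div]
      ring
    rw [h1, mul_comm, ← mul_assoc, ← Complex.exp_add, hsum, Complex.exp_sum,
      ← Finset.prod_mul_distrib]
    exact Finset.prod_congr rfl fun j _ => by rw [haev j]; ring
  simp_rw [hint]
  rw [integral_fintype_prod_volume_eq_prod (ι := Fin m)
    (f := fun (j : Fin m) (t : ℝ) => ((hermite (k j)).map (Int.castRingHom ℂ)).eval ((t : ℂ)) *
      Complex.exp (-((t : ℂ) - z j)^2/2))]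
  simp_rw [sb_key]
  rw [Finset.prod_mul_distrib, Finset.prod_const, Finset.card_univ, Fintype.card_fin]
  have hne : ((Real.sqrt (2 * Real.pi) : ℝ) : ℂ) ^ m ≠ 0 := by
    apply pow_ne_zero
    simp only [ne_eq, Complex.ofReal_eq_zero]
    positivity
  rw [Complex.ofReal_pow, ← mul_assoc, inv_mul_cancel₀ hne, one_mul]
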